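/- Let f : F₂^m → F₂ be a function with bias(f) ≥ ε > 0 and let δ ∈ (0,1). Set t = ⌈2·log₂(1/ε) + log₂(1/δ) + 1⌉. Then there exist directions y₁, ..., y_t ∈ F₂^m such that Pr_{x ∈ F₂^m}[ f(x) = Maj( Δ_{Σ_{i∈I} y_i} f(x) : ∅ ≠ I ⊆ {1,...,t} ) ] ≥ 1 - δ. -/

import Mathlib

open Finset

abbrev Cube (m : ℕ) := Fin m → ZMod 2
abbrev BF (m : ℕ) := Cube m → ZMod 2

/-- Codewords of RM(m,r): functions computed by a polynomial of total degree ≤ r. -/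
def RM (m r : ℕ) : Set (BF m) :=
  {f | ∃ p : MvPolynomial (Fin m) (ZMod 2), p.totalDegree ≤ r ∧
    ∀ x, MvPolynomial.eval x p = f x}

/-- Normalized weight of a Boolean function. -/
noncomputable def wt {m : ℕ} (f : BF m) : ℝ :=
  ((univ.filter fun x => f x = 1).card : ℝ) / 2 ^ m

/-- Bias of a Boolean function. -/
noncomputable def bias {m : ℕ} (f : BF m) : ℝ :=
  (∑ x : Cube m, if f x = 0 then (1 : ℝ) else -1) / 2 ^ m

/-- Number of codewords of RM(m,r) of weight at most β. -/
noncomputable def W (m r : ℕ) (β : ℝ) : ℕ :=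
  Set.ncard {f : BF m | f ∈ RM m r ∧ wt f ≤ β}

/-- binom(n, ≤ k) = ∑_{i=0}^k C(n,i). -/
def binomLe (n k : ℕ) : ℕ := ∑ i ∈ Finset.range (k + 1), n.choose i

/-- Discrete derivative of f in direction y: Δ_y f(x) = f(x+y) + f(x). -/
def DD {m : ℕ} (y : Cube m) (f : BF m) : BF m := fun x => f (x + y) + f x

/-- Iterated discrete derivative Δ_Y f = Δ_{y₁}Δ_{y₂}···Δ_{y_k} f for a tuple
Y = (y₁,…,y_k) of directions. -/
def DDs {m k : ℕ} (Y : Fin k → Cube m) (f : BF m) : BF m :=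
  (List.ofFn Y).foldr DD f

/-- Majority of a finite family of F₂ values: 1 if at least half of the values
equal 1, and 0 otherwise. -/
def Maj {ι : Type*} [Fintype ι] (v : ι → ZMod 2) : ZMod 2 :=
  if Fintype.card ι ≤ 2 * (Finset.univ.filter fun i => v i = 1).card then 1 else 0

set_option linter.unusedSectionVars false
set_option maxHeartbeats 1000000

section helpers
variable {G H : Type*} [AddCommGroup G] [AddCommGroup H] [Fintype G] [Fintype H]
  [DecidableEq H]

lemma fiber_card_const (φ : G →+ H) (hs : Function.Surjective φ) (h : H) :
    (univ.filter fun g => φ g = h).card = (univ.filter fun g => φ g = 0).card := by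
  obtain ⟨g₀, hg₀⟩ := hs h
  apply Finset.card_bij (fun g _ => g - g₀)
  · intro a ha
    simp only [mem_filter, mem_univ, true_and] at ha ⊢
    simp [map_sub, ha, hg₀]
  · intro a _ b _ hab
    simpa using sub_left_injective hab
  · intro b hb
    simp only [mem_filter, mem_univ, true_and] at hb
    exact ⟨b + g₀, by simp [map_add, hb, hg₀], by simp⟩

lemma fiber_card_mul (φ : G →+ H) (hs : Function.Surjective φ) (h : H) :
    (univ.filter fun g => φ g = h).card * Fintype.card H = Fintype.card G := by
  have h1 : (univ : Finset G).card = ∑ b : H, (univ.filter fun g => φ g = b).card :=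
    Finset.card_eq_sum_card_fiberwise (fun x _ => mem_univ _)
  rw [← Finset.card_univ (α := G), h1,
    Finset.sum_congr rfl fun b _ => fiber_card_const φ hs b,
    Finset.sum_const, fiber_card_const φ hs h, ← Finset.card_univ (α := H)]
  ring

lemma sum_comp_fiber (φ : G → H) [DecidableEq H] (F : H → ℝ) (c : ℕ)
    (hc : ∀ h, (univ.filter fun g => φ g = h).card = c) :
    ∑ g, F (φ g) = c * ∑ h, F h := by
  rw [← Finset.sum_fiberwise (univ : Finset G) φ (fun g => F (φ g))]
  rw [Finset.mul_sum]
  refine Finset.sum_congr rfl fun b _ => ?_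
  rw [Finset.sum_congr rfl (fun g hg => by
    simp only [mem_filter] at hg; rw [hg.2]), Finset.sum_const, hc b, nsmul_eq_mul]

end helpers

section homs
variable {V : Type*} [AddCommGroup V] [Fintype V] [DecidableEq V] {t : ℕ}

def finSumHom (t : ℕ) (I : Finset (Fin t)) : (Fin t → V) →+ V :=
  AddMonoidHom.mk' (fun y => ∑ i ∈ I, y i) (fun a b => by
    simp [Finset.sum_add_distrib])

def pairHom (t : ℕ) (I J : Finset (Fin t)) : (Fin t → V) →+ V × V :=
  AddMonoidHom.mk' (fun y => (∑ i ∈ I, y i, ∑ j ∈ J, y j)) (fun a b => by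
    simp [Finset.sum_add_distrib, Prod.ext_iff])

lemma finSumHom_surj {I : Finset (Fin t)} (hI : I.Nonempty) :
    Function.Surjective (finSumHom (V := V) t I) := by
  obtain ⟨i₀, hi₀⟩ := hI
  intro a
  exact ⟨Pi.single i₀ a, by simp [finSumHom, Finset.sum_pi_single', hi₀]⟩

lemma pairHom_surj_aux (hV : ∀ v : V, v + v = 0) {I J : Finset (Fin t)} {i₀ j₀ : Fin t}
    (hi₀I : i₀ ∈ I) (hi₀J : i₀ ∉ J) (hj₀ : j₀ ∈ J) :
    Function.Surjective (pairHom (V := V) t I J) := by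
  have hne : i₀ ≠ j₀ := fun h => hi₀J (h ▸ hj₀)
  have hsum : ∀ (s : Finset (Fin t)) (c d : V),
      ∑ x ∈ s, ((Pi.single i₀ c + Pi.single j₀ d : Fin t → V) x)
        = (if i₀ ∈ s then c else 0) + (if j₀ ∈ s then d else 0) := by
    intro s c d
    simp only [Pi.add_apply]
    rw [Finset.sum_add_distrib, Finset.sum_pi_single', Finset.sum_pi_single']
  rintro ⟨a, b⟩
  refine ⟨Pi.single i₀ (a + (if j₀ ∈ I then b else 0)) + Pi.single j₀ b, ?_⟩
  simp only [pairHom, AddMonoidHom.mk'_apply, Prod.ext_iff]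
  rw [hsum, hsum]
  constructor
  · by_cases hj : j₀ ∈ I
    · simp only [hi₀I, hj, if_pos]
      rw [add_assoc, hV b, add_zero]
    · simp [hi₀I, hj]
  · simp [hi₀J, hj₀]

lemma pairHom_surj (hV : ∀ v : V, v + v = 0) {I J : Finset (Fin t)}
    (hI : I.Nonempty) (hJ : J.Nonempty) (hne : I ≠ J) :
    Function.Surjective (pairHom (V := V) t I J) := by
  have hk : ∃ k, (k ∈ I ∧ k ∉ J) ∨ (k ∈ J ∧ k ∉ I) := by
    by_contra hc
    push_neg at hc
    exact hne (Finset.ext fun k => ⟨(hc k).1, (hc k).2⟩)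
  obtain ⟨k, hk | hk⟩ := hk
  · exact pairHom_surj_aux hV hk.1 hk.2 hJ.choose_spec
  · have hs := pairHom_surj_aux hV (I := J) (J := I) hk.1 hk.2 hI.choose_spec
    intro p
    obtain ⟨y, hy⟩ := hs p.swap
    refine ⟨y, ?_⟩
    have : (pairHom (V := V) t J I) y = (Prod.swap) ((pairHom (V := V) t I J) y) := rfl
    rw [this] at hy
    simpa using congrArg Prod.swap hy

end homs

section homapps
variable {V : Type*} [AddCommGroup V] [Fintype V] [DecidableEq V] {t : ℕ}
lemma finSumHom_apply (t : ℕ) (I : Finset (Fin t)) (y : Fin t → V) :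
    finSumHom (V := V) t I y = ∑ i ∈ I, y i := rfl
lemma pairHom_apply (t : ℕ) (I J : Finset (Fin t)) (y : Fin t → V) :
    pairHom (V := V) t I J y = (∑ i ∈ I, y i, ∑ j ∈ J, y j) := rfl
end homapps

lemma numeric_bound (ε δ : ℝ) (hε : 0 < ε) (hε1 : ε ≤ 1) (hδ0 : 0 < δ) (hδ1 : δ < 1) :
    1 ≤ ((2 ^ ⌈2 * Real.logb 2 (1 / ε) + Real.logb 2 (1 / δ) + 1⌉₊ - 1 : ℕ) : ℝ)
      * ε ^ 2 * δ := by
  set r : ℝ := 2 * Real.logb 2 (1 / ε) + Real.logb 2 (1 / δ) + 1 with hr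
  set t : ℕ := ⌈r⌉₊ with htdef
  have hrt : r ≤ (t : ℝ) := Nat.le_ceil r
  have h2r : (2 : ℝ) ^ r = (1 / ε) * (1 / ε) * (1 / δ) * 2 := by
    rw [hr]
    rw [show 2 * Real.logb 2 (1 / ε) = Real.logb 2 (1 / ε) + Real.logb 2 (1 / ε) by ring]
    rw [Real.rpow_add two_pos, Real.rpow_add two_pos, Real.rpow_add two_pos,
      Real.rpow_logb two_pos (by norm_num) (by positivity),
      Real.rpow_logb two_pos (by norm_num) (by positivity), Real.rpow_one]
  have h2t : (1 / ε) * (1 / ε) * (1 / δ) * 2 ≤ (2 : ℝ) ^ t := by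
    rw [← h2r, ← Real.rpow_natCast 2 t]
    exact Real.rpow_le_rpow_of_exponent_le one_le_two hrt
  have ht1 : 1 ≤ t := by
    have : 0 < r := by
      have h1 : 0 ≤ Real.logb 2 (1 / ε) := Real.logb_nonneg one_lt_two (by
        rw [le_div_iff₀ hε]; linarith)
      have h2 : 0 < Real.logb 2 (1 / δ) := Real.logb_pos one_lt_two (by
        rw [lt_div_iff₀ hδ0]; linarith)
      rw [hr]; linarith
    exact Nat.ceil_pos.mpr this
  have hcast : ((2 ^ t - 1 : ℕ) : ℝ) = (2 : ℝ) ^ t - 1 := by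
    rw [Nat.cast_sub (Nat.one_le_two_pow), Nat.cast_pow, Nat.cast_ofNat, Nat.cast_one]
  rw [hcast]
  set E : ℝ := ε ^ 2 * δ with hE
  have hE0 : 0 < E := by positivity
  have hE1 : E ≤ 1 := by nlinarith
  have key : 2 / E ≤ (2 : ℝ) ^ t := by
    refine le_trans (le_of_eq ?_) h2t
    rw [hE, div_eq_iff hE0.ne']
    field_simp
    ring
  have := mul_le_mul_of_nonneg_right key hE0.le
  rw [div_mul_cancel₀ 2 hE0.ne'] at this
  have : 1 ≤ ((2:ℝ) ^ t - 1) * E := by nlinarith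
  calc (1:ℝ) ≤ ((2:ℝ) ^ t - 1) * E := this
    _ = ((2:ℝ)^t - 1) * ε ^ 2 * δ := by rw [hE]; ring

lemma bad_count (m t : ℕ) (ht1 : 1 ≤ t) (f : BF m) (x : Cube m) (ε : ℝ)
    (hε : 0 < ε) (hb : ε ≤ bias f) :
    ((univ.filter fun y : Fin t → Cube m =>
        ¬ (f x = Maj fun I : {I : Finset (Fin t) // I.Nonempty} =>
            DD (∑ i ∈ I.1, y i) f x)).card : ℝ) * ((2 ^ t - 1 : ℕ) : ℝ) * ε ^ 2
      ≤ (Fintype.card (Fin t → Cube m) : ℝ) := by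
  classical
  set b : ℝ := bias f with hbdef
  set N : ℕ := 2 ^ t - 1 with hNdef
  set A : ℕ := Fintype.card (Fin t → Cube m) with hAdef
  -- basic facts
  have hVcard : (Fintype.card (Cube m) : ℝ) = 2 ^ m := by
    simp [Fintype.card_fun]
  have hchar : ∀ v : Cube m, v + v = 0 := fun v => by
    funext i; exact CharTwo.add_self_eq_zero _
  have hzmod : ∀ v : ZMod 2, v = 0 ∨ v = 1 := by decide
  have hcardS : Fintype.card {I : Finset (Fin t) // I.Nonempty} = N := by
    rw [Fintype.card_subtype]
    have : (univ.filter fun I : Finset (Fin t) => I.Nonempty) = univ.erase ∅ := by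
      ext I
      simp [Finset.nonempty_iff_ne_empty]
    rw [this, Finset.card_erase_of_mem (mem_univ _), Finset.card_univ,
      Fintype.card_finset, Fintype.card_fin]
  have hNodd : N % 2 = 1 := by
    have h2t : 2 ^ t = 2 * 2 ^ (t - 1) := by
      conv_lhs => rw [show t = (t - 1) + 1 by omega]
      ring
    have hpos : 1 ≤ 2 ^ (t - 1) := Nat.one_le_two_pow
    omega
  have hN1 : 1 ≤ N := by
    have : 2 ≤ 2 ^ t := by
      calc 2 = 2 ^ 1 := rfl
      _ ≤ 2 ^ t := Nat.pow_le_pow_right (by norm_num) ht1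
    omega
  -- the sign function
  set χ : Cube m → ℝ := fun s => if f (x + s) = 1 then 1 else -1 with hχdef
  have hχsum : ∑ s : Cube m, χ s = -b * 2 ^ m := by
    have e := Equiv.sum_comp (Equiv.addLeft x) (fun s => if f s = 1 then (1:ℝ) else -1)
    have e2 : ∑ s : Cube m, χ s = ∑ s : Cube m, if f s = 1 then (1:ℝ) else -1 := by
      rw [← e]; rfl
    rw [e2]
    have : ∀ s : Cube m, (if f s = 1 then (1:ℝ) else -1) = -(if f s = 0 then (1:ℝ) else -1) := by
      intro s
      rcases hzmod (f s) with h | h <;> simp [h]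
    rw [Finset.sum_congr rfl fun s _ => this s, Finset.sum_neg_distrib]
    rw [hbdef, bias]
    field_simp
  -- single fiber
  have hsingle : ∀ I : Finset (Fin t), I.Nonempty →
      ∑ y : Fin t → Cube m, χ (∑ i ∈ I, y i) = (A : ℝ) * (-b) := by
    intro I hI
    set c : ℕ := (univ.filter fun y : Fin t → Cube m => finSumHom t I y = 0).card with hcdef
    have hc : ∀ a, (univ.filter fun y : Fin t → Cube m => finSumHom t I y = a).card = c :=
      fun a => fiber_card_const _ (finSumHom_surj hI) a
    have hsum : ∑ y : Fin t → Cube m, χ (finSumHom t I y) = c * ∑ s, χ s :=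
      sum_comp_fiber _ χ c hc
    have hmul : (c : ℝ) * Fintype.card (Cube m) = A := by
      exact_mod_cast congrArg Nat.cast (fiber_card_mul _ (finSumHom_surj hI) 0)
    have : ∑ y : Fin t → Cube m, χ (∑ i ∈ I, y i)
        = ∑ y : Fin t → Cube m, χ (finSumHom t I y) := by
      refine Finset.sum_congr rfl fun y _ => ?_
      rw [finSumHom_apply]
    rw [this, hsum, hχsum, hVcard] at *
    nlinarith [hmul]
  -- pair fiber
  have hpair : ∀ I J : Finset (Fin t), I.Nonempty → J.Nonempty → I ≠ J →
      ∑ y : Fin t → Cube m, χ (∑ i ∈ I, y i) * χ (∑ j ∈ J, y j) = (A : ℝ) * b ^ 2 := by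
    intro I J hI hJ hne
    set c : ℕ := (univ.filter fun y : Fin t → Cube m => pairHom t I J y = 0).card with hcdef
    have hc : ∀ a, (univ.filter fun y : Fin t → Cube m => pairHom t I J y = a).card = c :=
      fun a => fiber_card_const _ (pairHom_surj hchar hI hJ hne) a
    have hsum : ∑ y : Fin t → Cube m, (fun p : Cube m × Cube m => χ p.1 * χ p.2) (pairHom t I J y)
        = c * ∑ p : Cube m × Cube m, χ p.1 * χ p.2 :=
      sum_comp_fiber _ (fun p : Cube m × Cube m => χ p.1 * χ p.2) c hc
    have hmul : (c : ℝ) * Fintype.card (Cube m × Cube m) = A := by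
      exact_mod_cast congrArg Nat.cast (fiber_card_mul _ (pairHom_surj hchar hI hJ hne) 0)
    have hprod : ∑ p : Cube m × Cube m, χ p.1 * χ p.2 = (∑ s, χ s) * (∑ s, χ s) := by
      rw [Fintype.sum_prod_type, ← Finset.sum_mul_sum]
    have heq : ∑ y : Fin t → Cube m, χ (∑ i ∈ I, y i) * χ (∑ j ∈ J, y j)
        = ∑ y : Fin t → Cube m, (fun p : Cube m × Cube m => χ p.1 * χ p.2) (pairHom t I J y) := by
      refine Finset.sum_congr rfl fun y _ => ?_
      rw [pairHom_apply]
    have hcardprod : (Fintype.card (Cube m × Cube m) : ℝ) = 2 ^ m * 2 ^ m := by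
      rw [Fintype.card_prod]; push_cast [hVcard]; nlinarith [hVcard]
    rw [heq, hsum, hprod, hχsum]
    rw [hcardprod] at hmul
    nlinarith [hmul]
  -- T
  set T : (Fin t → Cube m) → ℝ :=
    fun y => ∑ I : {I : Finset (Fin t) // I.Nonempty}, χ (∑ i ∈ I.1, y i) with hTdef
  have hT1 : ∑ y : Fin t → Cube m, T y = (N : ℝ) * ((A : ℝ) * (-b)) := by
    rw [hTdef]
    rw [Finset.sum_comm]
    rw [Finset.sum_congr rfl fun I _ => hsingle I.1 I.2]
    rw [Finset.sum_const, Finset.card_univ, hcardS, nsmul_eq_mul]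
  have hT2 : ∑ y : Fin t → Cube m, (T y) ^ 2
      = (N : ℝ) * A + ((N : ℝ) ^ 2 - N) * ((A : ℝ) * b ^ 2) := by
    have expand : ∀ y, (T y) ^ 2 = ∑ I : {I : Finset (Fin t) // I.Nonempty},
        ∑ J : {I : Finset (Fin t) // I.Nonempty}, χ (∑ i ∈ I.1, y i) * χ (∑ j ∈ J.1, y j) := by
      intro y
      rw [hTdef, sq, Finset.sum_mul_sum]
    rw [Finset.sum_congr rfl fun y _ => expand y, Finset.sum_comm]
    rw [Finset.sum_congr rfl (fun I _ => Finset.sum_comm)]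
    have hone : ∀ s, χ s * χ s = 1 := by
      intro s; rw [hχdef]; dsimp only; split <;> norm_num
    have inner : ∀ I : {I : Finset (Fin t) // I.Nonempty},
        ∑ J : {I : Finset (Fin t) // I.Nonempty}, ∑ y : Fin t → Cube m,
          χ (∑ i ∈ I.1, y i) * χ (∑ j ∈ J.1, y j)
        = (A : ℝ) + ((N : ℝ) - 1) * ((A : ℝ) * b ^ 2) := by
      intro I
      have hJ : ∀ J : {I : Finset (Fin t) // I.Nonempty},
          ∑ y : Fin t → Cube m, χ (∑ i ∈ I.1, y i) * χ (∑ j ∈ J.1, y j)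
          = (A : ℝ) * b ^ 2 + (if J = I then (A : ℝ) - (A : ℝ) * b ^ 2 else 0) := by
        intro J
        by_cases hJI : J = I
        · subst hJI
          rw [if_pos rfl]
          rw [Finset.sum_congr rfl fun y _ => hone _, Finset.sum_const,
            Finset.card_univ, nsmul_eq_mul, ← hAdef]
          ring
        · rw [if_neg hJI, add_zero]
          exact hpair I.1 J.1 I.2 J.2 (fun h => hJI (Subtype.ext h.symm))
      rw [Finset.sum_congr rfl fun J _ => hJ J, Finset.sum_add_distrib,
        Finset.sum_const, Finset.card_univ, hcardS,
        Finset.sum_ite_eq' univ I (fun _ => (A : ℝ) - (A : ℝ) * b ^ 2),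
        if_pos (mem_univ I), nsmul_eq_mul]
      ring
    rw [Finset.sum_congr rfl fun I _ => inner I, Finset.sum_const, Finset.card_univ,
      hcardS, nsmul_eq_mul]
    ring
  -- second moment bound
  have hAcard : (univ : Finset (Fin t → Cube m)).card = A := Finset.card_univ
  have hsq : ∑ y : Fin t → Cube m, (T y + (N : ℝ) * b) ^ 2
      = (N : ℝ) * A * (1 - b ^ 2) := by
    have expand : ∀ y : Fin t → Cube m, (T y + (N : ℝ) * b) ^ 2
        = (T y) ^ 2 + (2 * N * b) * T y + ((N : ℝ) * b) ^ 2 := by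
      intro y; ring
    rw [Finset.sum_congr rfl fun y _ => expand y, Finset.sum_add_distrib,
      Finset.sum_add_distrib, ← Finset.mul_sum, hT1, hT2, Finset.sum_const,
      hAcard, nsmul_eq_mul]
    ring
  -- the bad set
  set B := (univ.filter fun y : Fin t → Cube m =>
      ¬ (f x = Maj fun I : {I : Finset (Fin t) // I.Nonempty} =>
          DD (∑ i ∈ I.1, y i) f x)) with hBdef
  have hz2 : ∀ a : ZMod 2, (a + 1 = 1 ↔ ¬ (a = 1)) := by decide
  have hTB : ∀ y ∈ B, 0 ≤ T y := by
    intro y hy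
    rw [hBdef, mem_filter] at hy
    have hbad := hy.2
    set Z : ℕ := (univ.filter fun I : {I : Finset (Fin t) // I.Nonempty} =>
        f (x + ∑ i ∈ I.1, y i) = 1).card with hZdef
    have hTZ : T y = 2 * (Z : ℝ) - N := by
      simp only [hTdef]
      have : ∀ I : {I : Finset (Fin t) // I.Nonempty},
          χ (∑ i ∈ I.1, y i)
          = 2 * (if f (x + ∑ i ∈ I.1, y i) = 1 then (1:ℝ) else 0) - 1 := by
        intro I; rw [hχdef]; dsimp only; split <;> norm_num
      rw [Finset.sum_congr rfl fun I _ => this I, Finset.sum_sub_distrib,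
        ← Finset.mul_sum, Finset.sum_boole, Finset.sum_const, Finset.card_univ,
        hcardS, nsmul_eq_mul, mul_one]
    have hNZ : N ≤ 2 * Z := by
      by_contra hc
      push_neg at hc
      apply hbad
      unfold Maj
      rw [hcardS]
      rcases hzmod (f x) with hfx | hfx
      · have hfilter : (univ.filter fun I : {I : Finset (Fin t) // I.Nonempty} =>
            DD (∑ i ∈ I.1, y i) f x = 1)
            = (univ.filter fun I : {I : Finset (Fin t) // I.Nonempty} =>
                f (x + ∑ i ∈ I.1, y i) = 1) := by
          refine Finset.filter_congr fun I _ => ?_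
          simp [DD, hfx]
        rw [hfilter, ← hZdef, if_neg (by omega), hfx]
      · have hfilter : (univ.filter fun I : {I : Finset (Fin t) // I.Nonempty} =>
            DD (∑ i ∈ I.1, y i) f x = 1)
            = (univ.filter fun I : {I : Finset (Fin t) // I.Nonempty} =>
                ¬ (f (x + ∑ i ∈ I.1, y i) = 1)) := by
          refine Finset.filter_congr fun I _ => ?_
          simp only [DD, hfx, hz2]
        have hsplit : Z + (univ.filter fun I : {I : Finset (Fin t) // I.Nonempty} =>
            ¬ (f (x + ∑ i ∈ I.1, y i) = 1)).card = N := by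
          rw [hZdef]
          rw [Finset.card_filter_add_card_filter_not]
          rw [Finset.card_univ, hcardS]
        rw [hfilter, if_pos (by omega), hfx]
    rw [hTZ]
    have : (N : ℝ) ≤ 2 * Z := by exact_mod_cast hNZ
    linarith
  -- Chebyshev counting
  have hNpos : (0 : ℝ) < N := by exact_mod_cast hN1
  have hb2 : 0 ≤ b := le_trans hε.le hb
  have step1 : (B.card : ℝ) * ((N : ℝ) * ε) ^ 2 ≤ (N : ℝ) * A := by
    have h1 : ∀ y ∈ B, ((N : ℝ) * ε) ^ 2 ≤ (T y + (N : ℝ) * b) ^ 2 := by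
      intro y hy
      have h0 : (0:ℝ) ≤ (N : ℝ) * ε := by positivity
      have : (N : ℝ) * ε ≤ T y + (N : ℝ) * b := by
        have := hTB y hy
        nlinarith [hNpos]
      exact pow_le_pow_left₀ h0 this 2
    calc (B.card : ℝ) * ((N : ℝ) * ε) ^ 2
        = ∑ _y ∈ B, ((N : ℝ) * ε) ^ 2 := by rw [Finset.sum_const, nsmul_eq_mul]
      _ ≤ ∑ y ∈ B, (T y + (N : ℝ) * b) ^ 2 := Finset.sum_le_sum h1
      _ ≤ ∑ y : Fin t → Cube m, (T y + (N : ℝ) * b) ^ 2 := by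
          refine Finset.sum_le_sum_of_subset_of_nonneg (Finset.subset_univ B) ?_
          intro y _ _; positivity
      _ = (N : ℝ) * A * (1 - b ^ 2) := hsq
      _ ≤ (N : ℝ) * A := by
          have hA0 : (0:ℝ) ≤ (A:ℝ) := Nat.cast_nonneg A
          nlinarith [mul_nonneg (mul_nonneg hNpos.le hA0) (sq_nonneg b)]
  rw [← mul_le_mul_iff_of_pos_right hNpos]
  calc (B.card : ℝ) * (N : ℝ) * ε ^ 2 * N = (B.card : ℝ) * ((N : ℝ) * ε) ^ 2 := by ring
    _ ≤ (N : ℝ) * A := step1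
    _ = (A : ℝ) * N := by ring

/-- a function with bias at least ε is (1-δ)-approximated by the
majority of the derivatives along all nonempty subset-sums of
t = ⌈2log₂(1/ε) + log₂(1/δ) + 1⌉ directions (Lemma 2.4 of
Kaufman–Lovett–Porat, `KPL2`). -/
lemma bias_le_one {m : ℕ} (f : BF m) : bias f ≤ 1 := by
  rw [bias, div_le_one (by positivity)]
  calc ∑ x : Cube m, (if f x = 0 then (1:ℝ) else -1)
      ≤ ∑ _x : Cube m, (1:ℝ) := Finset.sum_le_sum (fun x _ => by split <;> norm_num)
    _ = 2 ^ m := by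
        rw [Finset.sum_const, Finset.card_univ, nsmul_eq_mul, mul_one]
        simp

lemma ceil_t_pos (ε δ : ℝ) (hε : 0 < ε) (hε1 : ε ≤ 1) (hδ0 : 0 < δ) (hδ1 : δ < 1) :
    1 ≤ ⌈2 * Real.logb 2 (1 / ε) + Real.logb 2 (1 / δ) + 1⌉₊ := by
  have h1 : 0 ≤ Real.logb 2 (1 / ε) := Real.logb_nonneg one_lt_two (by
    rw [le_div_iff₀ hε]; linarith)
  have h2 : 0 < Real.logb 2 (1 / δ) := Real.logb_pos one_lt_two (by
    rw [lt_div_iff₀ hδ0]; linarith)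
  exact Nat.ceil_pos.mpr (by linarith)

theorem low_bias_approx_by_derivatives (m : ℕ) (f : BF m) (ε δ : ℝ)
    (hε : 0 < ε) (hbias : ε ≤ bias f) (hδ0 : 0 < δ) (hδ1 : δ < 1) :
    ∃ y : Fin ⌈2 * Real.logb 2 (1 / ε) + Real.logb 2 (1 / δ) + 1⌉₊ → Cube m,
      1 - δ ≤
        (((Finset.univ.filter fun x : Cube m =>
              f x = Maj fun I :
                  {I : Finset (Fin ⌈2 * Real.logb 2 (1 / ε) +
                      Real.logb 2 (1 / δ) + 1⌉₊) // I.Nonempty} =>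
                DD (∑ i ∈ I.1, y i) f x).card : ℝ) / 2 ^ m) := by
  classical
  have hε1 : ε ≤ 1 := le_trans hbias (bias_le_one f)
  set t : ℕ := ⌈2 * Real.logb 2 (1 / ε) + Real.logb 2 (1 / δ) + 1⌉₊ with htdef
  have ht1 : 1 ≤ t := ceil_t_pos ε δ hε hε1 hδ0 hδ1
  have hnum : 1 ≤ ((2 ^ t - 1 : ℕ) : ℝ) * ε ^ 2 * δ :=
    numeric_bound ε δ hε hε1 hδ0 hδ1
  set A : ℕ := Fintype.card (Fin t → Cube m) with hAdef
  set P : Cube m → (Fin t → Cube m) → Prop := fun x y =>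
    f x = Maj fun I : {I : Finset (Fin t) // I.Nonempty} => DD (∑ i ∈ I.1, y i) f x
    with hPdef
  -- per-x good bound
  have hgood : ∀ x : Cube m,
      (1 - δ) * A ≤ ((univ.filter fun y : Fin t → Cube m => P x y).card : ℝ) := by
    intro x
    have hbc := bad_count m t ht1 f x ε hε hbias
    set Bc : ℕ := (univ.filter fun y : Fin t → Cube m => ¬ P x y).card with hBcdef
    set Gc : ℕ := (univ.filter fun y : Fin t → Cube m => P x y).card with hGcdef
    have hsplit : Gc + Bc = A := by
      rw [hGcdef, hBcdef, Finset.card_filter_add_card_filter_not,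
        Finset.card_univ]
    have hBδ : (Bc : ℝ) ≤ δ * A := by
      have h0 : (0:ℝ) ≤ (Bc : ℝ) := Nat.cast_nonneg _
      have step : (Bc : ℝ) ≤ (Bc : ℝ) * (((2 ^ t - 1 : ℕ) : ℝ) * ε ^ 2 * δ) := by
        nlinarith
      calc (Bc : ℝ) ≤ (Bc : ℝ) * (((2 ^ t - 1 : ℕ) : ℝ) * ε ^ 2 * δ) := step
        _ = ((Bc : ℝ) * ((2 ^ t - 1 : ℕ) : ℝ) * ε ^ 2) * δ := by ring
        _ ≤ (A : ℝ) * δ := mul_le_mul_of_nonneg_right hbc hδ0.le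
        _ = δ * A := by ring
    have : (Gc : ℝ) + (Bc : ℝ) = A := by exact_mod_cast hsplit
    linarith
  -- averaging
  by_contra hcon
  push_neg at hcon
  have hswap : ∑ y : Fin t → Cube m, ((univ.filter fun x : Cube m => P x y).card)
      = ∑ x : Cube m, ((univ.filter fun y : Fin t → Cube m => P x y).card) := by
    simp only [Finset.card_filter]
    exact Finset.sum_comm
  have hApos : 0 < A := Fintype.card_pos
  have hXcard : ((Fintype.card (Cube m) : ℝ)) = 2 ^ m := by simp
  -- lower bound on the double sum
  have hlow : ((2:ℝ) ^ m) * ((1 - δ) * A)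
      ≤ ∑ x : Cube m, ((univ.filter fun y : Fin t → Cube m => P x y).card : ℝ) := by
    calc ((2:ℝ) ^ m) * ((1 - δ) * A)
        = ∑ _x : Cube m, ((1 - δ) * A) := by
          rw [Finset.sum_const, Finset.card_univ, nsmul_eq_mul, hXcard]
      _ ≤ ∑ x : Cube m, ((univ.filter fun y : Fin t → Cube m => P x y).card : ℝ) :=
          Finset.sum_le_sum fun x _ => hgood x
  have hup : ∑ y : Fin t → Cube m, ((univ.filter fun x : Cube m => P x y).card : ℝ)
      < (A : ℝ) * ((1 - δ) * 2 ^ m) := by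
    have hterm : ∀ y : Fin t → Cube m,
        ((univ.filter fun x : Cube m => P x y).card : ℝ) < (1 - δ) * 2 ^ m := by
      intro y
      have := hcon y
      rw [div_lt_iff₀ (by positivity : (0:ℝ) < 2 ^ m)] at this
      · linarith [this]
    calc ∑ y : Fin t → Cube m, ((univ.filter fun x : Cube m => P x y).card : ℝ)
        < ∑ _y : Fin t → Cube m, ((1 - δ) * 2 ^ m) := by
          refine Finset.sum_lt_sum_of_nonempty univ_nonempty fun y _ => hterm y
      _ = (A : ℝ) * ((1 - δ) * 2 ^ m) := by
          rw [Finset.sum_const, Finset.card_univ, nsmul_eq_mul, hAdef]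
  have hswapR : ∑ y : Fin t → Cube m, ((univ.filter fun x : Cube m => P x y).card : ℝ)
      = ∑ x : Cube m, ((univ.filter fun y : Fin t → Cube m => P x y).card : ℝ) := by
    exact_mod_cast congrArg (Nat.cast : ℕ → ℝ) (by
      push_cast
      exact_mod_cast hswap)
  rw [hswapR] at hup
  nlinarith [hlow, hup]
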